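/- For every integer n ≥ 3, the spectral radius of the compacted matrix C_n is the unique real root larger than 1 of the polynomial Q_n(x) = x^n − 2(n−1)·Σ_{j=1}^{n−1} x^j + 1; in particular ρ(C_n) > 1 and Q_n(ρ(C_n)) = 0. -/

import Mathlib

/-- The spectral radius of a square real matrix: the maximum (supremum) of the
moduli of its complex eigenvalues. -/
noncomputable def specRad {m : Type*} [Fintype m] [DecidableEq m]
    (M : Matrix m m ℝ) : ℝ :=
  sSup {x : ℝ | ∃ z ∈ spectrum ℂ (M.map (algebraMap ℝ ℂ)), ‖z‖ = x}

/-- Entry `(i+1, j+1)` of the compacted matrix `C_n` of rank `n` (zero-indexed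
`i, j ∈ {0, …, 2n-2}` corresponding to one-indexed indices in `{1, …, 2n-1}`). -/
def Cfun (n i j : ℕ) : ℝ :=
  if i + 1 ≤ n - 3 ∧ j = i + 1 then 1
  else if i = n - 3 ∧ (j = n - 2 ∨ j = n - 1) then 1
  else if i = n - 2 ∧ j + 1 ≤ n then (n : ℝ) - 2
  else if i = n - 2 ∧ n ≤ j then (n : ℝ) - 1
  else if i = n - 1 then 1
  else if i = n ∧ j + 2 ≤ n then (n : ℝ) - 1
  else if i = n ∧ n - 1 ≤ j then (n : ℝ) - 2
  else if i = n + 1 ∧ (j = n - 1 ∨ j = n) then 1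
  else if n + 2 ≤ i ∧ j + 1 = i then 1
  else 0

/-- The compacted matrix `C_n` of rank `n`, of size `(2n-1) × (2n-1)`. -/
def Cmat (n : ℕ) : Matrix (Fin (2 * n - 1)) (Fin (2 * n - 1)) ℝ :=
  Matrix.of fun i j => Cfun n i.val j.val

open Polynomial in
/-- The polynomial `Q_n(x) = x^n − 2(n−1)·Σ_{j=1}^{n−1} x^j + 1`. -/
noncomputable def Qpoly (n : ℕ) : Polynomial ℝ :=
  X ^ n - C (2 * ((n : ℝ) - 1)) * (∑ j ∈ Finset.Icc 1 (n - 1), X ^ j) + 1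

section Aux
open Polynomial Finset

noncomputable def qf (n : ℕ) (x : ℝ) : ℝ :=
  x ^ n - 2 * ((n : ℝ) - 1) * (∑ j ∈ Finset.Icc 1 (n - 1), x ^ j) + 1



lemma Qpoly_eval (n : ℕ) (x : ℝ) : (Qpoly n).eval x = qf n x := by
  simp [Qpoly, qf, eval_finset_sum]

lemma sum_Icc_pow (x : ℝ) (n : ℕ) (hn : 1 ≤ n) :
    ∑ j ∈ Finset.Icc 1 (n - 1), x ^ j = x * ∑ k ∈ Finset.range (n - 1), x ^ k := by
  have h : Finset.Icc 1 (n - 1) = Finset.Ico 1 n := by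
    rw [← Finset.Ico_add_one_right_eq_Icc]
    congr 1
    omega
  rw [h, Finset.sum_Ico_eq_sum_range, Finset.mul_sum]
  refine Finset.sum_congr (by congr 1) fun i _ => ?_
  rw [pow_add, pow_one]


lemma qf_cross {m : ℕ} {x y : ℝ} (hx : 1 ≤ x) (hxy : x < y) :
    0 < qf (m + 3) y * x ^ (m + 2) - qf (m + 3) x * y ^ (m + 2) := by
  have hy : 1 ≤ y := le_of_lt (lt_of_le_of_lt hx hxy)
  have hx0 : 0 < x := lt_of_lt_of_le one_pos hx
  have hy0 : 0 < y := lt_of_lt_of_le one_pos hy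
  set S : ℝ := ∑ j ∈ Finset.Icc 1 (m + 2), (x ^ (m + 2) * y ^ j - y ^ (m + 2) * x ^ j) with hS
  -- step 0 : rewrite the difference
  have step0 : qf (m + 3) y * x ^ (m + 2) - qf (m + 3) x * y ^ (m + 2)
      = (y ^ (m + 3) * x ^ (m + 2) - x ^ (m + 3) * y ^ (m + 2))
        + (x ^ (m + 2) - y ^ (m + 2)) - 2 * ((m : ℝ) + 2) * S := by
    have e1 : S = x ^ (m + 2) * (∑ j ∈ Finset.Icc 1 (m + 2), y ^ j)
        - y ^ (m + 2) * (∑ j ∈ Finset.Icc 1 (m + 2), x ^ j) := by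
      rw [hS, Finset.sum_sub_distrib, Finset.mul_sum, Finset.mul_sum]
    simp only [qf, show m + 3 - 1 = m + 2 from rfl]
    push_cast
    rw [e1]
    ring
  -- step 1 : S ≤ (xy)^{m+1} (x - y)
  have hmem : m + 1 ∈ Finset.Icc 1 (m + 2) := by simp
  have step1 : S ≤ x ^ (m + 1) * y ^ (m + 1) * (x - y) := by
    rw [hS, ← Finset.add_sum_erase _ _ hmem]
    have h1 : x ^ (m + 2) * y ^ (m + 1) - y ^ (m + 2) * x ^ (m + 1)
        = x ^ (m + 1) * y ^ (m + 1) * (x - y) := by ring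
    have h2 : ∑ j ∈ (Finset.Icc 1 (m + 2)).erase (m + 1),
        (x ^ (m + 2) * y ^ j - y ^ (m + 2) * x ^ j) ≤ 0 := by
      refine Finset.sum_nonpos fun j hj => ?_
      have hj2 : j ≤ m + 2 := by
        have := Finset.mem_erase.1 hj
        have := Finset.mem_Icc.1 this.2
        omega
      have e1 : x ^ (m + 2) = x ^ j * x ^ (m + 2 - j) := by
        rw [← pow_add]; congr 1; omega
      have e2 : y ^ (m + 2) = y ^ j * y ^ (m + 2 - j) := by
        rw [← pow_add]; congr 1; omega
      have h3 : x ^ (m + 2 - j) ≤ y ^ (m + 2 - j) :=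
        pow_le_pow_left₀ (by linarith) hxy.le _
      have h4 : (0:ℝ) ≤ x ^ j := by positivity
      have h5 : (0:ℝ) ≤ y ^ j := by positivity
      rw [e1, e2]
      nlinarith [mul_le_mul_of_nonneg_left h3 (mul_nonneg h4 h5)]
    linarith [h1 ▸ le_refl (x ^ (m + 2) * y ^ (m + 1) - y ^ (m + 2) * x ^ (m + 1))]
  -- step 2 : y^{m+2} - x^{m+2} ≤ (m+2)(y-x)(xy)^{m+1}
  have step2 : y ^ (m + 2) - x ^ (m + 2)
      ≤ ((m : ℝ) + 2) * (y - x) * (x ^ (m + 1) * y ^ (m + 1)) := by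
    have hg := geom_sum₂_mul y x (m + 2)
    have hb : (∑ i ∈ Finset.range (m + 2), y ^ i * x ^ (m + 2 - 1 - i))
        ≤ ((m : ℝ) + 2) * (x ^ (m + 1) * y ^ (m + 1)) := by
      have := Finset.sum_le_card_nsmul (Finset.range (m + 2))
        (fun i => y ^ i * x ^ (m + 2 - 1 - i)) (x ^ (m + 1) * y ^ (m + 1)) ?_
      · simpa [Finset.card_range, nsmul_eq_mul, mul_comm, add_comm] using this
      · intro i hi
        have hi2 : i ≤ m + 1 := by simpa using Nat.lt_succ_iff.1 (Finset.mem_range.1 hi)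
        have h1 : y ^ i ≤ y ^ (m + 1) := pow_le_pow_right₀ hy hi2
        have h2 : x ^ (m + 2 - 1 - i) ≤ x ^ (m + 1) := pow_le_pow_right₀ hx (by omega)
        have h3 : (0:ℝ) ≤ y ^ i := by positivity
        have h4 : (0:ℝ) ≤ x ^ (m + 1) := by positivity
        calc y ^ i * x ^ (m + 2 - 1 - i) ≤ y ^ i * x ^ (m + 1) :=
              mul_le_mul_of_nonneg_left h2 h3
          _ ≤ y ^ (m + 1) * x ^ (m + 1) := mul_le_mul_of_nonneg_right h1 h4
          _ = x ^ (m + 1) * y ^ (m + 1) := by ring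
    have hyx : (0:ℝ) ≤ y - x := by linarith
    nlinarith [mul_le_mul_of_nonneg_right hb hyx]
  have hp1 : (0:ℝ) < x ^ (m + 1) * y ^ (m + 1) := by positivity
  have hp2 : (0:ℝ) < x ^ (m + 2) * y ^ (m + 2) := by positivity
  have hm2 : (0:ℝ) < (m : ℝ) + 2 := by positivity
  have hstep1' : - (2 * ((m : ℝ) + 2)) * S
      ≥ - (2 * ((m : ℝ) + 2)) * (x ^ (m + 1) * y ^ (m + 1) * (x - y)) := by
    have := mul_le_mul_of_nonneg_left step1 (by positivity : (0:ℝ) ≤ 2 * ((m : ℝ) + 2))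
    linarith
  rw [step0]
  have e3 : y ^ (m + 3) * x ^ (m + 2) - x ^ (m + 3) * y ^ (m + 2)
      = (y - x) * (x ^ (m + 2) * y ^ (m + 2)) := by ring
  nlinarith [mul_pos (sub_pos.2 hxy) hp2, mul_pos (sub_pos.2 hxy) hp1]


lemma qf_continuous (n : ℕ) : Continuous (qf n) := by
  unfold qf
  exact (((continuous_pow n).sub (continuous_const.mul
    (continuous_finset_sum _ fun i _ => continuous_pow i))).add continuous_const)

lemma exists_root (m : ℕ) : ∃ L : ℝ, 3 < L ∧ qf (m + 3) L = 0 ∧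
    ∀ x : ℝ, 1 < x → qf (m + 3) x = 0 → x = L := by
  set n := m + 3 with hn
  have hncast : ((n : ℝ)) = (m : ℝ) + 3 := by push_cast [hn]; ring
  -- qf n 3 < 0
  have h3 : qf n 3 < 0 := by
    have hmem : n - 1 ∈ Finset.Icc 1 (n - 1) := by simp [hn]
    have h1 : (3:ℝ) ^ (n - 1) ≤ ∑ j ∈ Finset.Icc 1 (n - 1), (3:ℝ) ^ j :=
      Finset.single_le_sum (fun i _ => by positivity) hmem
    have h2 : (4:ℝ) ≤ 2 * ((n : ℝ) - 1) := by rw [hncast]; linarith [Nat.cast_nonneg (α := ℝ) m]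
    have h3' : (3:ℝ) ^ n = 3 * 3 ^ (n - 1) := by
      rw [show n = (n-1)+1 from by omega, pow_succ']
      simp [hn]
    have h4 : (9:ℝ) ≤ 3 ^ (n - 1) := by
      calc (9:ℝ) = 3 ^ 2 := by norm_num
        _ ≤ 3 ^ (n - 1) := pow_le_pow_right₀ (by norm_num) (by omega)
    have h5 : (0:ℝ) < 3 ^ (n-1) := by positivity
    unfold qf
    nlinarith [mul_le_mul h2 h1 (by positivity) (by linarith)]
  -- qf n x₀ > 0 for x₀ = 2(n-1)^2+1
  set x₀ : ℝ := 2 * ((n : ℝ) - 1) ^ 2 + 1 with hx₀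
  have hm0 : (0:ℝ) ≤ (m:ℝ) := Nat.cast_nonneg m
  have hx₀3 : 3 ≤ x₀ := by rw [hx₀, hncast]; nlinarith
  have hx₀1 : 1 ≤ x₀ := by linarith
  have hpos : 0 < qf n x₀ := by
    have hcard : (Finset.Icc 1 (n - 1)).card = n - 1 := by
      rw [Nat.card_Icc]; omega
    have h1 : ∑ j ∈ Finset.Icc 1 (n - 1), x₀ ^ j ≤ ((n:ℝ) - 1) * x₀ ^ (n - 1) := by
      have hb : ∀ j ∈ Finset.Icc 1 (n - 1), x₀ ^ j ≤ x₀ ^ (n - 1) := by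
        intro j hj
        exact pow_le_pow_right₀ hx₀1 (Finset.mem_Icc.1 hj).2
      have := Finset.sum_le_card_nsmul (Finset.Icc 1 (n - 1))
        (fun j => x₀ ^ j) (x₀ ^ (n - 1)) hb
      rw [hcard, nsmul_eq_mul] at this
      have hc : ((n - 1 : ℕ) : ℝ) = (n : ℝ) - 1 := by
        rw [Nat.cast_sub (by omega)]; simp
      rw [hc] at this
      exact this
    have h2 : x₀ ^ n = x₀ ^ (n - 1) * x₀ := by
      rw [show n = (n-1)+1 from by omega, pow_succ]
      simp [hn]
    have h3' : (0:ℝ) < x₀ ^ (n - 1) := by positivity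
    have h4 : (0:ℝ) ≤ 2 * ((n:ℝ) - 1) := by rw [hncast]; linarith
    unfold qf
    nlinarith [mul_le_mul_of_nonneg_left h1 h4]
  -- IVT
  obtain ⟨L, hLmem, hLroot⟩ : ∃ L ∈ Set.Icc (3:ℝ) x₀, qf n L = 0 := by
    have := intermediate_value_Icc hx₀3 ((qf_continuous n).continuousOn)
    have h0 : (0:ℝ) ∈ Set.Icc (qf n 3) (qf n x₀) := ⟨h3.le, hpos.le⟩
    obtain ⟨L, hL, hL0⟩ := this h0
    exact ⟨L, hL, hL0⟩
  have hL3 : 3 < L := by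
    rcases eq_or_lt_of_le hLmem.1 with h | h
    · exfalso; rw [← h] at hLroot; linarith
    · exact h
  refine ⟨L, hL3, hLroot, fun x hx hqx => ?_⟩
  rcases lt_trichotomy x L with h | h | h
  · exfalso
    have := qf_cross (m := m) hx.le h
    rw [hqx, hLroot] at this
    simp at this
  · exact h
  · exfalso
    have := qf_cross (m := m) (by linarith : (1:ℝ) ≤ L) h
    rw [hqx, hLroot] at this
    simp at this


def vfun (m : ℕ) (L a b : ℝ) (t : ℕ) : ℝ :=
  if t ≤ m then L ^ t
  else if t = m + 1 then a
  else if t = m + 2 then b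
  else if t = m + 3 then a
  else L ^ (2 * m + 4 - t)

section rows
variable (m j : ℕ)

lemma rowLow {i : ℕ} (hi : i < m) (j : ℕ) :
    Cfun (m + 3) i j = if j = i + 1 then 1 else 0 := by
  unfold Cfun
  split_ifs <;> first | rfl | omega | (exfalso; omega) | (push_cast; ring) | norm_num

lemma rowM : Cfun (m + 3) m j
    = (if j = m + 1 then (1:ℝ) else 0) + (if j = m + 2 then (1:ℝ) else 0) := by
  unfold Cfun
  split_ifs <;> first | rfl | omega | (exfalso; omega) | (push_cast; ring) | norm_num

lemma rowM1 : Cfun (m + 3) (m + 1) j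
    = if j ≤ m + 2 then ((m:ℝ) + 1) else ((m:ℝ) + 2) := by
  unfold Cfun
  split_ifs <;> first | rfl | omega | (exfalso; omega) | (push_cast; ring) | norm_num

lemma rowM2 : Cfun (m + 3) (m + 2) j = 1 := by
  unfold Cfun
  split_ifs <;> first | rfl | omega | (exfalso; omega) | (push_cast; ring) | norm_num

lemma rowM3 : Cfun (m + 3) (m + 3) j
    = if j ≤ m + 1 then ((m:ℝ) + 2) else ((m:ℝ) + 1) := by
  unfold Cfun
  split_ifs <;> first | rfl | omega | (exfalso; omega) | (push_cast; ring) | norm_num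

lemma rowM4 : Cfun (m + 3) (m + 4) j
    = (if j = m + 2 then (1:ℝ) else 0) + (if j = m + 3 then (1:ℝ) else 0) := by
  unfold Cfun
  split_ifs <;> first | rfl | omega | (exfalso; omega) | (push_cast; ring) | norm_num

lemma rowHigh {i : ℕ} (hi : m + 5 ≤ i) (j : ℕ) :
    Cfun (m + 3) i j = if j = i - 1 then 1 else 0 := by
  unfold Cfun
  split_ifs <;> first | rfl | omega | (exfalso; omega) | (push_cast; ring) | norm_num

end rows

lemma sum_delta {N c : ℕ} (hc : c < N) (f : ℕ → ℝ) :
    ∑ j ∈ Finset.range N, (if j = c then (1:ℝ) else 0) * f j = f c := by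
  rw [Finset.sum_eq_single c (fun b _ hb => by simp [hb])
    (fun h => absurd (Finset.mem_range.2 hc) h)]
  simp

section vsums
variable (m : ℕ) (L a b : ℝ)

lemma v_low {t : ℕ} (ht : t ≤ m) : vfun m L a b t = L ^ t := by
  rw [vfun, if_pos ht]

lemma v_m1 : vfun m L a b (m + 1) = a := by
  rw [vfun, if_neg (by omega), if_pos rfl]

lemma v_m2 : vfun m L a b (m + 2) = b := by
  rw [vfun, if_neg (by omega), if_neg (by omega), if_pos rfl]

lemma v_m3 : vfun m L a b (m + 3) = a := by
  rw [vfun, if_neg (by omega), if_neg (by omega), if_neg (by omega), if_pos rfl]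

lemma v_high {t : ℕ} (ht : m + 4 ≤ t) : vfun m L a b t = L ^ (2 * m + 4 - t) := by
  rw [vfun, if_neg (by omega), if_neg (by omega), if_neg (by omega), if_neg (by omega)]

lemma sumA1 : ∑ j ∈ Finset.range (m + 1), vfun m L a b j
    = ∑ j ∈ Finset.range (m + 1), L ^ j :=
  Finset.sum_congr rfl fun j hj => v_low m L a b (by have := Finset.mem_range.1 hj; omega)

lemma sumA2 : ∑ j ∈ Finset.range (m + 2), vfun m L a b j
    = (∑ j ∈ Finset.range (m + 1), L ^ j) + a := by
  rw [Finset.sum_range_succ, sumA1, v_m1]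

lemma sumA3 : ∑ j ∈ Finset.range (m + 3), vfun m L a b j
    = (∑ j ∈ Finset.range (m + 1), L ^ j) + a + b := by
  rw [Finset.sum_range_succ, sumA2, v_m2]

lemma sumB0 : ∑ j ∈ Finset.Ico (m + 4) (2 * m + 5), vfun m L a b j
    = ∑ j ∈ Finset.range (m + 1), L ^ j := by
  have h1 : ∑ j ∈ Finset.Ico (m + 4) (2 * m + 5), vfun m L a b j
      = ∑ j ∈ Finset.Ico (m + 4) (2 * m + 5), L ^ (2 * m + 4 - j) :=
    Finset.sum_congr rfl fun j hj =>
      v_high m L a b (Finset.mem_Ico.1 hj).1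
  rw [h1, Finset.sum_Ico_eq_sum_range]
  have h2 : 2 * m + 5 - (m + 4) = m + 1 := by omega
  rw [h2]
  have h3 : ∀ i ∈ Finset.range (m + 1), L ^ (2 * m + 4 - (m + 4 + i)) = L ^ (m + 1 - 1 - i) := by
    intro i hi
    congr 1
    have := Finset.mem_range.1 hi
    omega
  rw [Finset.sum_congr rfl h3, Finset.sum_range_reflect (fun i => L ^ i) (m + 1)]

lemma sumB2 : ∑ j ∈ Finset.Ico (m + 3) (2 * m + 5), vfun m L a b j
    = a + ∑ j ∈ Finset.range (m + 1), L ^ j := by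
  rw [Finset.sum_eq_sum_Ico_succ_bot (by omega), v_m3]
  have : m + 3 + 1 = m + 4 := by omega
  rw [this, sumB0]

lemma sumB1 : ∑ j ∈ Finset.Ico (m + 2) (2 * m + 5), vfun m L a b j
    = b + (a + ∑ j ∈ Finset.range (m + 1), L ^ j) := by
  rw [Finset.sum_eq_sum_Ico_succ_bot (by omega), v_m2]
  have : m + 2 + 1 = m + 3 := by omega
  rw [this, sumB2]

end vsums

lemma eigen_row (m : ℕ) (L a b : ℝ)
    (hE1 : a + b = L ^ (m + 1))
    (hE2 : ((m:ℝ) + 1) * ((∑ j ∈ Finset.range (m + 1), L ^ j) + a + b)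
          + ((m:ℝ) + 2) * (a + ∑ j ∈ Finset.range (m + 1), L ^ j) = L * a)
    (hE3 : 2 * (∑ j ∈ Finset.range (m + 1), L ^ j) + 2 * a + b = L * b)
    {i : ℕ} (hi : i < 2 * m + 5) :
    ∑ j ∈ Finset.range (2 * m + 5), Cfun (m + 3) i j * vfun m L a b j
      = L * vfun m L a b i := by
  set T : ℝ := ∑ j ∈ Finset.range (m + 1), L ^ j with hT
  have hLm : L ^ (m + 1) = L * L ^ m := by rw [pow_succ']
  have hsplit3 : ∀ f : ℕ → ℝ, ∑ j ∈ Finset.range (2 * m + 5), f j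
      = (∑ j ∈ Finset.range (m + 3), f j) + ∑ j ∈ Finset.Ico (m + 3) (2 * m + 5), f j := by
    intro f
    simp only [Finset.range_eq_Ico]
    exact (Finset.sum_Ico_consecutive _ (Nat.zero_le _) (by omega)).symm
  have hsplit2 : ∀ f : ℕ → ℝ, ∑ j ∈ Finset.range (2 * m + 5), f j
      = (∑ j ∈ Finset.range (m + 2), f j) + ∑ j ∈ Finset.Ico (m + 2) (2 * m + 5), f j := by
    intro f
    simp only [Finset.range_eq_Ico]
    exact (Finset.sum_Ico_consecutive _ (Nat.zero_le _) (by omega)).symm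
  rcases Nat.lt_or_ge i m with h | h
  · -- shift rows at the top
    rw [Finset.sum_congr rfl (fun j _ => by rw [rowLow m h j]),
      sum_delta (by omega) (vfun m L a b),
      v_low m L a b (by omega : i + 1 ≤ m), v_low m L a b (by omega : i ≤ m), pow_succ']
  rcases Nat.eq_or_lt_of_le h with h | h
  · -- i = m
    rw [← h]
    rw [Finset.sum_congr rfl (fun j _ => by rw [rowM m j]),
      Finset.sum_congr rfl (fun j _ => add_mul _ _ (vfun m L a b j)),
      Finset.sum_add_distrib, sum_delta (by omega) (vfun m L a b),
      sum_delta (by omega) (vfun m L a b), v_m1, v_m2, v_low m L a b (le_refl m)]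
    rw [← hLm]; linarith
  rcases Nat.eq_or_lt_of_le h with h | h
  · -- i = m + 1
    rw [← h]
    rw [Finset.sum_congr rfl (fun j _ => by rw [rowM1 m j]), hsplit3]
    have e1 : ∑ j ∈ Finset.range (m + 3),
        (if j ≤ m + 2 then ((m:ℝ) + 1) else ((m:ℝ) + 2)) * vfun m L a b j
        = ((m:ℝ) + 1) * (T + a + b) := by
      rw [← sumA3 m L a b, Finset.mul_sum]
      refine Finset.sum_congr rfl fun j hj => ?_
      rw [if_pos (by have := Finset.mem_range.1 hj; omega)]
    have e2 : ∑ j ∈ Finset.Ico (m + 3) (2 * m + 5),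
        (if j ≤ m + 2 then ((m:ℝ) + 1) else ((m:ℝ) + 2)) * vfun m L a b j
        = ((m:ℝ) + 2) * (a + T) := by
      rw [← sumB2 m L a b, Finset.mul_sum]
      refine Finset.sum_congr rfl fun j hj => ?_
      rw [if_neg (by have := (Finset.mem_Ico.1 hj).1; omega)]
    rw [e1, e2, v_m1]
    linarith [hE2]
  rcases Nat.eq_or_lt_of_le h with h | h
  · -- i = m + 2
    rw [← h]
    rw [Finset.sum_congr rfl (fun j _ => by rw [rowM2 m j, one_mul]), hsplit3,
      sumA3, sumB2, v_m2]
    linarith [hE3]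
  rcases Nat.eq_or_lt_of_le h with h | h
  · -- i = m + 3
    rw [← h]
    rw [Finset.sum_congr rfl (fun j _ => by rw [rowM3 m j]), hsplit2]
    have e1 : ∑ j ∈ Finset.range (m + 2),
        (if j ≤ m + 1 then ((m:ℝ) + 2) else ((m:ℝ) + 1)) * vfun m L a b j
        = ((m:ℝ) + 2) * (T + a) := by
      rw [← sumA2 m L a b, Finset.mul_sum]
      refine Finset.sum_congr rfl fun j hj => ?_
      rw [if_pos (by have := Finset.mem_range.1 hj; omega)]
    have e2 : ∑ j ∈ Finset.Ico (m + 2) (2 * m + 5),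
        (if j ≤ m + 1 then ((m:ℝ) + 2) else ((m:ℝ) + 1)) * vfun m L a b j
        = ((m:ℝ) + 1) * (b + (a + T)) := by
      rw [← sumB1 m L a b, Finset.mul_sum]
      refine Finset.sum_congr rfl fun j hj => ?_
      rw [if_neg (by have := (Finset.mem_Ico.1 hj).1; omega)]
    rw [e1, e2, v_m3]
    linarith [hE2]
  rcases Nat.eq_or_lt_of_le h with h | h
  · -- i = m + 4
    rw [← h]
    rw [Finset.sum_congr rfl (fun j _ => by rw [rowM4 m j]),
      Finset.sum_congr rfl (fun j _ => add_mul _ _ (vfun m L a b j)),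
      Finset.sum_add_distrib, sum_delta (by omega) (vfun m L a b),
      sum_delta (by omega) (vfun m L a b), v_m2, v_m3,
      v_high m L a b (le_refl (m + 4))]
    have e : 2 * m + 4 - (m + 4) = m := by omega
    rw [e, ← hLm]
    linarith
  · -- i ≥ m + 5
    rw [Finset.sum_congr rfl (fun j _ => by rw [rowHigh m h j]),
      sum_delta (by omega) (vfun m L a b),
      v_high m L a b (by omega : m + 4 ≤ i - 1),
      v_high m L a b (by omega : m + 4 ≤ i)]
    have e : 2 * m + 4 - (i - 1) = (2 * m + 4 - i) + 1 := by omega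
    rw [e, pow_succ']


lemma eigen_consts (m : ℕ) (L : ℝ) (hL : 3 < L)
    (hQ : L ^ (m + 3) + 1
      = 2 * ((m:ℝ) + 2) * (L * ∑ k ∈ Finset.range (m + 2), L ^ k)) :
    ∃ a b : ℝ, 0 < a ∧ 0 < b ∧
      (a + b = L ^ (m + 1)) ∧
      (((m:ℝ) + 1) * ((∑ j ∈ Finset.range (m + 1), L ^ j) + a + b)
          + ((m:ℝ) + 2) * (a + ∑ j ∈ Finset.range (m + 1), L ^ j) = L * a) ∧
      (2 * (∑ j ∈ Finset.range (m + 1), L ^ j) + 2 * a + b = L * b) := by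
  have hL0 : (0:ℝ) < L := by linarith
  have hL1 : L + 1 ≠ 0 := by positivity
  set T : ℝ := ∑ j ∈ Finset.range (m + 1), L ^ j with hTdef
  set U : ℝ := ∑ j ∈ Finset.range (m + 2), L ^ j with hUdef
  have hTU : U = T + L ^ (m + 1) := Finset.sum_range_succ _ _
  have hU : (L - 1) * U = L ^ (m + 2) - 1 := by
    rw [mul_comm]; exact geom_sum_mul L (m + 2)
  have hT : (L - 1) * T = L ^ (m + 1) - 1 := by
    rw [mul_comm]; exact geom_sum_mul L (m + 1)
  have key : L + 1 = L * U * (2 * (m:ℝ) + 5 - L) := by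
    linear_combination hQ + L * hU
  obtain ⟨a, ha⟩ : ∃ a : ℝ, a * (L + 1) = (L - 1) * L ^ (m + 1) - 2 * T :=
    ⟨((L - 1) * L ^ (m + 1) - 2 * T) / (L + 1), div_mul_cancel₀ _ hL1⟩
  obtain ⟨b, hb⟩ : ∃ b : ℝ, b = L ^ (m + 1) - a := ⟨_, rfl⟩
  have hP0 : (0:ℝ) < L ^ (m + 1) := by positivity
  have hT0 : (0:ℝ) < T := by
    rw [hTdef]
    exact Finset.sum_pos (fun i _ => by positivity) (by simp)
  -- positivity of a
  have hapos : 0 < a := by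
    have h1 : 0 < a * (L + 1) := by
      rw [ha]
      nlinarith [hT, hP0]
    nlinarith [h1]
  have hbpos : 0 < b := by
    have h1 : 0 < b * (L + 1) := by
      have : b * (L + 1) = 2 * L ^ (m + 1) + 2 * T := by
        rw [hb]; linear_combination -ha
      rw [this]; nlinarith
    nlinarith [h1]
  refine ⟨a, b, hapos, hbpos, by rw [hb]; ring, ?_, ?_⟩
  · have hcancel : (((m:ℝ) + 1) * (T + a + b) + ((m:ℝ) + 2) * (a + T)) * (L + 1)
        = (L * a) * (L + 1) := by
      linear_combination ((m:ℝ) + 2 - L) * ha + ((m:ℝ) + 1) * (L + 1) * hb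
        - ((2 * (m:ℝ) + 5) * L - 1) * hTU + (L + 1) * hU - key
    exact mul_right_cancel₀ hL1 hcancel
  · linear_combination ha - (L - 1) * hb


lemma matrix_mem_spectrum_iff {N : ℕ} (M : Matrix (Fin N) (Fin N) ℂ) (z : ℂ) :
    z ∈ spectrum ℂ M ↔ ∃ w : Fin N → ℂ, w ≠ 0 ∧ M.mulVec w = z • w := by
  rw [spectrum.mem_iff, Matrix.isUnit_iff_isUnit_det, isUnit_iff_ne_zero, not_not,
    ← Matrix.exists_mulVec_eq_zero_iff]
  constructor
  · rintro ⟨w, hw0, hw⟩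
    refine ⟨w, hw0, ?_⟩
    rwa [Matrix.sub_mulVec, Algebra.algebraMap_eq_smul_one, Matrix.smul_mulVec,
      Matrix.one_mulVec, sub_eq_zero, eq_comm] at hw
  · rintro ⟨w, hw0, hw⟩
    refine ⟨w, hw0, ?_⟩
    rw [Matrix.sub_mulVec, Algebra.algebraMap_eq_smul_one, Matrix.smul_mulVec,
      Matrix.one_mulVec, sub_eq_zero, hw]

lemma specRad_eq_of_eigen {N : ℕ} (hN : 0 < N) (A : Matrix (Fin N) (Fin N) ℝ)
    (hA : ∀ i j, 0 ≤ A i j) (L : ℝ) (hL : 0 < L)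
    (v : Fin N → ℝ) (hv : ∀ j, 0 < v j)
    (heig : A.mulVec v = L • v) :
    specRad A = L := by
  set Mc : Matrix (Fin N) (Fin N) ℂ := A.map (algebraMap ℝ ℂ) with hMc
  have hMcapp : ∀ i j, Mc i j = ((A i j : ℝ) : ℂ) := fun i j => rfl
  have heig' : ∀ i, ∑ k, A i k * v k = L * v i := by
    intro i
    have := congrFun heig i
    simpa [Matrix.mulVec, dotProduct] using this
  -- membership
  have hmem : (L : ℂ) ∈ spectrum ℂ Mc := by
    rw [matrix_mem_spectrum_iff]
    refine ⟨fun j => ((v j : ℝ) : ℂ), ?_, ?_⟩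
    · intro h
      have := congrFun h ⟨0, hN⟩
      simp only [Pi.zero_apply, Complex.ofReal_eq_zero] at this
      exact (hv ⟨0, hN⟩).ne' this
    · funext i
      have h1 : Mc.mulVec (fun j => ((v j : ℝ) : ℂ)) i
          = ((∑ k, A i k * v k : ℝ) : ℂ) := by
        simp only [Matrix.mulVec, dotProduct, hMcapp]
        push_cast
        rfl
      rw [h1, heig' i]
      simp only [Pi.smul_apply, smul_eq_mul]
      push_cast
      ring
  -- upper bound
  have hub : ∀ x ∈ {x : ℝ | ∃ z ∈ spectrum ℂ Mc, ‖z‖ = x}, x ≤ L := by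
    rintro x ⟨z, hz, rfl⟩
    obtain ⟨w, hw0, hw⟩ := (matrix_mem_spectrum_iff Mc z).1 hz
    obtain ⟨j₀, -, hmax⟩ := Finset.exists_max_image Finset.univ
      (fun j => ‖w j‖ / v j) ⟨⟨0, hN⟩, Finset.mem_univ _⟩
    set c : ℝ := ‖w j₀‖ / v j₀ with hc
    have hck : ∀ k, ‖w k‖ ≤ c * v k := by
      intro k
      have := hmax k (Finset.mem_univ k)
      exact (div_le_iff₀ (hv k)).1 this
    have hc0 : 0 < c := by
      obtain ⟨k, hk⟩ := Function.ne_iff.1 hw0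
      have h1 : 0 < ‖w k‖ := by
        simpa using (norm_pos_iff.2 (by simpa using hk))
      have h2 : 0 < ‖w k‖ / v k := div_pos h1 (hv k)
      have := hmax k (Finset.mem_univ k)
      linarith
    have hwj0 : ‖w j₀‖ = c * v j₀ := by
      rw [hc, div_mul_cancel₀ _ (hv j₀).ne']
    have key : ‖z‖ * (c * v j₀) ≤ L * (c * v j₀) := by
      calc ‖z‖ * (c * v j₀) = ‖z‖ * ‖w j₀‖ := by rw [hwj0]
        _ = ‖z * w j₀‖ := (norm_mul z (w j₀)).symm
        _ = ‖Mc.mulVec w j₀‖ := by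
            rw [hw]; simp only [Pi.smul_apply, smul_eq_mul]
        _ ≤ ∑ k, ‖Mc j₀ k * w k‖ := by
            simp only [Matrix.mulVec, dotProduct]
            exact norm_sum_le _ _
        _ = ∑ k, A j₀ k * ‖w k‖ := by
            refine Finset.sum_congr rfl fun k _ => ?_
            rw [hMcapp, norm_mul, Complex.norm_real, Real.norm_eq_abs, abs_of_nonneg (hA j₀ k)]
        _ ≤ ∑ k, A j₀ k * (c * v k) :=
            Finset.sum_le_sum fun k _ => mul_le_mul_of_nonneg_left (hck k) (hA j₀ k)
        _ = c * ∑ k, A j₀ k * v k := by rw [Finset.mul_sum]; exact Finset.sum_congr rfl fun k _ => by ring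
        _ = c * (L * v j₀) := by rw [heig' j₀]
        _ = L * (c * v j₀) := by ring
    have hpos : 0 < c * v j₀ := mul_pos hc0 (hv j₀)
    exact le_of_mul_le_mul_right key hpos
  have hLS : L ∈ {x : ℝ | ∃ z ∈ spectrum ℂ Mc, ‖z‖ = x} :=
    ⟨(L : ℂ), hmem, by rw [Complex.norm_real, Real.norm_eq_abs]; exact abs_of_pos hL⟩
  refine le_antisymm (csSup_le ⟨L, hLS⟩ hub) (le_csSup ⟨L, fun x hx => hub x hx⟩ hLS)

end Aux


lemma Cfun_nonneg (m i j : ℕ) : 0 ≤ Cfun (m + 3) i j := by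
  unfold Cfun
  split_ifs <;> (push_cast; nlinarith [Nat.cast_nonneg (α := ℝ) m])

theorem stmt12 (n : ℕ) (hn : 3 ≤ n) :
    1 < specRad (Cmat n) ∧ (Qpoly n).eval (specRad (Cmat n)) = 0 ∧
      ∀ x : ℝ, 1 < x → (Qpoly n).eval x = 0 → x = specRad (Cmat n) := by
  obtain ⟨m, rfl⟩ : ∃ m, n = m + 3 := ⟨n - 3, by omega⟩
  obtain ⟨L, hL3, hLroot, huniq⟩ := exists_root m
  have hL0 : (0:ℝ) < L := by linarith
  have hQU : L ^ (m + 3) + 1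
      = 2 * ((m:ℝ) + 2) * (L * ∑ k ∈ Finset.range (m + 2), L ^ k) := by
    have h1 := hLroot
    unfold qf at h1
    rw [sum_Icc_pow L (m + 3) (by omega), show m + 3 - 1 = m + 2 from rfl] at h1
    push_cast at h1
    linarith
  obtain ⟨a, b, ha0, hb0, hE1, hE2, hE3⟩ := eigen_consts m L hL3 hQU
  have hsize : 2 * (m + 3) - 1 = 2 * m + 5 := by omega
  set v : Fin (2 * (m + 3) - 1) → ℝ := fun j => vfun m L a b j.val with hv
  have hvpos : ∀ j, 0 < v j := by
    intro j
    rw [hv]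
    simp only [vfun]
    split_ifs <;> first | exact pow_pos hL0 _ | exact ha0 | exact hb0
  have heig : (Cmat (m + 3)).mulVec v = L • v := by
    funext i
    have hi : i.val < 2 * m + 5 := by have := i.isLt; omega
    have hrow := eigen_row m L a b hE1 hE2 hE3 hi
    simp only [Matrix.mulVec, dotProduct, Cmat, Matrix.of_apply, hv,
      Pi.smul_apply, smul_eq_mul]
    rw [Fin.sum_univ_eq_sum_range
      (fun t => Cfun (m + 3) i.val t * vfun m L a b t) (2 * (m + 3) - 1)]
    rw [← hsize] at hrow
    exact hrow
  have hspec : specRad (Cmat (m + 3)) = L :=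
    specRad_eq_of_eigen (by omega) (Cmat (m + 3))
      (fun i j => Cfun_nonneg m i.val j.val) L hL0 v hvpos heig
  refine ⟨by rw [hspec]; linarith, by rw [hspec, Qpoly_eval]; exact hLroot, ?_⟩
  intro x hx hqx
  rw [hspec]
  exact huniq x hx (by rwa [Qpoly_eval] at hqx)
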